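/- Let R be the free noncommutative F-algebra on two generators X₁, X₂ over F = ℚ(A), with the endomorphisms T₁, T₁⁻, T₂, T₂⁻ and the two-sided ideal J as above. Then for k ∈ {1,2}, the element T₂⁻T₁⁻T₂⁻T₁T₂T₁(X_k) − X_k belongs to J; that is, the relation T₂⁻T₁⁻T₂⁻T₁T₂T₁(X_k) = X_k holds in the quotient algebra B = R/J. -/
import Mathlib

set_option maxHeartbeats 1000000


/-- `F = ℚ(A)`, the field of rational functions in one variable over `ℚ`. -/
noncomputable abbrev F : Type := RatFunc ℚ

/-- The variable `A ∈ ℚ(A)`. -/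
noncomputable def A : F := RatFunc.X

/-- The deformed bracket `[x,y]_A = A·(x*y) − A⁻¹·(y*x)` in an `F`-algebra. -/
noncomputable def brA {S : Type*} [Ring S] [Algebra F S] (x y : S) : S :=
  A • (x * y) - A⁻¹ • (y * x)

/-- `R`, the free noncommutative `F`-algebra on two generators. -/
noncomputable abbrev R : Type := FreeAlgebra F (Fin 2)

/-- The first generator `X₁`. -/
noncomputable def X1 : R := FreeAlgebra.ι F 0

/-- The second generator `X₂`. -/
noncomputable def X2 : R := FreeAlgebra.ι F 1

/-- The generators as a function on `Fin 2`. -/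
noncomputable def X : Fin 2 → R := ![X1, X2]

/-- `T₁ : X₁ ↦ X₁, X₂ ↦ [X₁,X₂]_A`. -/
noncomputable def T1 : R →ₐ[F] R := FreeAlgebra.lift F ![X1, brA X1 X2]

/-- `T₁⁻ : X₁ ↦ X₁, X₂ ↦ [X₂,X₁]_A`. -/
noncomputable def T1inv : R →ₐ[F] R := FreeAlgebra.lift F ![X1, brA X2 X1]

/-- `T₂ : X₁ ↦ [X₂,X₁]_A, X₂ ↦ X₂`. -/
noncomputable def T2 : R →ₐ[F] R := FreeAlgebra.lift F ![brA X2 X1, X2]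

/-- `T₂⁻ : X₁ ↦ [X₁,X₂]_A, X₂ ↦ X₂`. -/
noncomputable def T2inv : R →ₐ[F] R := FreeAlgebra.lift F ![brA X1 X2, X2]

/-- The two-sided ideal `J` generated by `[[X₁,X₂]_A, X₁]_A − X₂` and
`[[X₂,X₁]_A, X₂]_A − X₁`. -/
noncomputable def J : TwoSidedIdeal R :=
  TwoSidedIdeal.span {brA (brA X1 X2) X1 - X2, brA (brA X2 X1) X2 - X1}

/-! ### Auxiliary definitions and lemmas -/

/-- First defining relation. -/
noncomputable def rel1 : R := brA (brA X1 X2) X1 - X2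

/-- Second defining relation. -/
noncomputable def rel2 : R := brA (brA X2 X1) X2 - X1

lemma hrel1 : rel1 ∈ J := TwoSidedIdeal.subset_span (by left; rfl)

lemma hrel2 : rel2 ∈ J := TwoSidedIdeal.subset_span (by right; rfl)

lemma J_smul {x : R} (c : F) (h : x ∈ J) : c • x ∈ J := by
  rw [Algebra.smul_def]; exact J.mul_mem_left _ _ h

lemma J_brA_left {x : R} (y : R) (h : x ∈ J) : brA x y ∈ J :=
  J.sub_mem (J_smul _ (J.mul_mem_right _ _ h)) (J_smul _ (J.mul_mem_left _ _ h))

lemma J_brA_right {x : R} (y : R) (h : x ∈ J) : brA y x ∈ J :=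
  J.sub_mem (J_smul _ (J.mul_mem_left _ _ h)) (J_smul _ (J.mul_mem_right _ _ h))

@[simp] lemma T1_X1 : T1 X1 = X1 := by simp [T1, X1, FreeAlgebra.lift_ι_apply]
@[simp] lemma T1_X2 : T1 X2 = brA X1 X2 := by simp [T1, X2, FreeAlgebra.lift_ι_apply]
@[simp] lemma T1inv_X1 : T1inv X1 = X1 := by simp [T1inv, X1, FreeAlgebra.lift_ι_apply]
@[simp] lemma T1inv_X2 : T1inv X2 = brA X2 X1 := by simp [T1inv, X2, FreeAlgebra.lift_ι_apply]
@[simp] lemma T2_X1 : T2 X1 = brA X2 X1 := by simp [T2, X1, FreeAlgebra.lift_ι_apply]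
@[simp] lemma T2_X2 : T2 X2 = X2 := by simp [T2, X2, FreeAlgebra.lift_ι_apply]
@[simp] lemma T2inv_X1 : T2inv X1 = brA X1 X2 := by simp [T2inv, X1, FreeAlgebra.lift_ι_apply]
@[simp] lemma T2inv_X2 : T2inv X2 = X2 := by simp [T2inv, X2, FreeAlgebra.lift_ι_apply]

@[simp] lemma map_brA (f : R →ₐ[F] R) (x y : R) : f (brA x y) = brA (f x) (f y) := by
  simp [brA]

/-- If two algebra endomorphisms agree modulo `J` on the generators, they agree
modulo `J` everywhere. -/
lemma agree (f g : R →ₐ[F] R) (h1 : f X1 - g X1 ∈ J) (h2 : f X2 - g X2 ∈ J) (x : R) :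
    f x - g x ∈ J := by
  induction x using FreeAlgebra.induction with
  | grade0 r => simpa using J.zero_mem
  | grade1 i =>
      fin_cases i
      · exact h1
      · exact h2
  | mul a b ha hb =>
      have key : f (a * b) - g (a * b) = f a * (f b - g b) + (f a - g a) * g b := by
        rw [map_mul, map_mul, mul_sub, sub_mul]; abel
      rw [key]
      exact J.add_mem (J.mul_mem_left _ _ hb) (J.mul_mem_right _ _ ha)
  | add a b ha hb =>
      have key : f (a + b) - g (a + b) = (f a - g a) + (f b - g b) := by
        rw [map_add, map_add]; abel
      rw [key]
      exact J.add_mem ha hb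

/-- A homomorphism mapping both relations into `J` maps `J` into `J`. -/
lemma stab (f : R →ₐ[F] R) (h1 : f rel1 ∈ J) (h2 : f rel2 ∈ J) {x : R} (hx : x ∈ J) :
    f x ∈ J := by
  have : x ∈ TwoSidedIdeal.comap f J := by
    rw [J, TwoSidedIdeal.mem_span_iff] at hx
    exact hx _ (by
      rintro y (rfl | rfl)
      · exact (TwoSidedIdeal.mem_comap f).2 h1
      · exact (TwoSidedIdeal.mem_comap f).2 h2)
  exact (TwoSidedIdeal.mem_comap f).1 this

lemma E3 : T1inv rel1 = brA rel1 X1 := by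
  simp only [map_sub, map_add, map_brA, rel1, T1inv_X1, T1inv_X2]
  simp only [brA, smul_sub, sub_mul, mul_sub, smul_mul_assoc, mul_smul_comm,
    smul_smul, mul_assoc, smul_add, add_mul, mul_add, neg_sub, sub_sub]
  ring_nf
  abel

lemma E4 : T1inv rel2 = brA (brA X2 X1) rel1 + rel2 := by
  simp only [map_sub, map_add, map_brA, rel1, rel2, T1inv_X1, T1inv_X2]
  simp only [brA, smul_sub, sub_mul, mul_sub, smul_mul_assoc, mul_smul_comm,
    smul_smul, mul_assoc, smul_add, add_mul, mul_add, neg_sub, sub_sub]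
  ring_nf
  abel

lemma E5 : T2inv rel2 = brA rel2 X2 := by
  simp only [map_sub, map_add, map_brA, rel2, T2inv_X1, T2inv_X2]
  simp only [brA, smul_sub, sub_mul, mul_sub, smul_mul_assoc, mul_smul_comm,
    smul_smul, mul_assoc, smul_add, add_mul, mul_add, neg_sub, sub_sub]
  ring_nf
  abel

lemma E6 : T2inv rel1 = brA (brA X1 X2) rel2 + rel1 := by
  simp only [map_sub, map_add, map_brA, rel1, rel2, T2inv_X1, T2inv_X2]
  simp only [brA, smul_sub, sub_mul, mul_sub, smul_mul_assoc, mul_smul_comm,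
    smul_smul, mul_assoc, smul_add, add_mul, mul_add, neg_sub, sub_sub]
  ring_nf
  abel

lemma st_T1inv {x : R} (hx : x ∈ J) : T1inv x ∈ J :=
  stab T1inv (E3 ▸ J_brA_left _ hrel1)
    (E4 ▸ J.add_mem (J_brA_right _ hrel1) hrel2) hx

lemma st_T2inv {x : R} (hx : x ∈ J) : T2inv x ∈ J :=
  stab T2inv (E6 ▸ J.add_mem (J_brA_right _ hrel2) hrel1)
    (E5 ▸ J_brA_left _ hrel2) hx

lemma E9 : T1inv (T1 X2) - X2 = rel1 := by
  simp only [map_sub, map_add, map_brA, rel1, T1_X1, T1_X2, T1inv_X1, T1inv_X2]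
  simp only [brA, smul_sub, sub_mul, mul_sub, smul_mul_assoc, mul_smul_comm,
    smul_smul, mul_assoc, smul_add, add_mul, mul_add, neg_sub, sub_sub]
  ring_nf
  abel

lemma E10 : T2inv (T2 X1) - X1 = rel2 := by
  simp only [map_sub, map_add, map_brA, rel2, T2_X1, T2_X2, T2inv_X1, T2inv_X2]
  simp only [brA, smul_sub, sub_mul, mul_sub, smul_mul_assoc, mul_smul_comm,
    smul_smul, mul_assoc, smul_add, add_mul, mul_add, neg_sub, sub_sub]
  ring_nf
  abel

/-- `T1inv ∘ T1 ≡ id` modulo `J`, pointwise. -/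
lemma T1inv_T1 (x : R) : T1inv (T1 x) - x ∈ J := by
  have := agree (T1inv.comp T1) (AlgHom.id F R) ?_ ?_ x
  · simpa using this
  · simp only [AlgHom.comp_apply, AlgHom.id_apply, T1_X1, T1inv_X1, sub_self]
    exact J.zero_mem
  · simpa only [AlgHom.comp_apply, AlgHom.id_apply, E9] using hrel1

/-- `T2inv ∘ T2 ≡ id` modulo `J`, pointwise. -/
lemma T2inv_T2 (x : R) : T2inv (T2 x) - x ∈ J := by
  have := agree (T2inv.comp T2) (AlgHom.id F R) ?_ ?_ x
  · simpa using this
  · simpa only [AlgHom.comp_apply, AlgHom.id_apply, E10] using hrel2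
  · simp only [AlgHom.comp_apply, AlgHom.id_apply, T2_X2, T2inv_X2, sub_self]
    exact J.zero_mem

/-- Braid relation on the first generator. -/
lemma E7 : T1 (T2 (T1 X1)) - T2 (T1 (T2 X1)) = -brA rel2 (brA X2 X1) := by
  simp only [map_sub, map_add, map_brA, rel2, T1_X1, T1_X2, T2_X1, T2_X2]
  simp only [brA, smul_sub, sub_mul, mul_sub, smul_mul_assoc, mul_smul_comm,
    smul_smul, mul_assoc, smul_add, add_mul, mul_add, neg_sub, sub_sub]
  ring_nf
  abel

/-- Braid relation on the second generator. -/
lemma E8 : T1 (T2 (T1 X2)) - T2 (T1 (T2 X2)) = brA rel1 (brA X1 X2) := by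
  simp only [map_sub, map_add, map_brA, rel1, T1_X1, T1_X2, T2_X1, T2_X2]
  simp only [brA, smul_sub, sub_mul, mul_sub, smul_mul_assoc, mul_smul_comm,
    smul_smul, mul_assoc, smul_add, add_mul, mul_add, neg_sub, sub_sub]
  ring_nf
  abel

lemma braid (k : Fin 2) : T1 (T2 (T1 (X k))) - T2 (T1 (T2 (X k))) ∈ J := by
  fin_cases k
  · show T1 (T2 (T1 (X 0))) - T2 (T1 (T2 (X 0))) ∈ J
    have hX : X 0 = X1 := rfl
    rw [hX, E7]
    exact J.neg_mem (J_brA_left _ hrel2)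
  · show T1 (T2 (T1 (X 1))) - T2 (T1 (T2 (X 1))) ∈ J
    have hX : X 1 = X2 := rfl
    rw [hX, E8]
    exact J_brA_left _ hrel1

/-- The relation `T₂⁻T₁⁻T₂⁻T₁T₂T₁(X_k) = X_k` holds in the quotient `B = R/J`
(the braid relation `t₁t₂t₁ = t₂t₁t₂` among the corresponding Dehn twists). -/
theorem braid_relation_inverse_form_mem (k : Fin 2) :
    T2inv (T1inv (T2inv (T1 (T2 (T1 (X k)))))) - X k ∈ J := by
  -- step 1: replace T1 T2 T1 by T2 T1 T2 inside, using stability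
  have h1 : T2inv (T1 (T2 (T1 (X k)))) - T2inv (T2 (T1 (T2 (X k)))) ∈ J := by
    have := st_T2inv (braid k)
    simpa [map_sub] using this
  -- step 2: cancel T2inv ∘ T2
  have h2 : T2inv (T2 (T1 (T2 (X k)))) - T1 (T2 (X k)) ∈ J := T2inv_T2 _
  have h3 : T2inv (T1 (T2 (T1 (X k)))) - T1 (T2 (X k)) ∈ J := by
    have := J.add_mem h1 h2
    simpa using this
  -- step 3: apply T1inv, cancel T1inv ∘ T1
  have h4 : T1inv (T2inv (T1 (T2 (T1 (X k))))) - T1inv (T1 (T2 (X k))) ∈ J := by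
    have := st_T1inv h3
    simpa [map_sub] using this
  have h5 : T1inv (T1 (T2 (X k))) - T2 (X k) ∈ J := T1inv_T1 _
  have h6 : T1inv (T2inv (T1 (T2 (T1 (X k))))) - T2 (X k) ∈ J := by
    have := J.add_mem h4 h5
    simpa using this
  -- step 4: apply T2inv, cancel T2inv ∘ T2
  have h7 : T2inv (T1inv (T2inv (T1 (T2 (T1 (X k)))))) - T2inv (T2 (X k)) ∈ J := by
    have := st_T2inv h6
    simpa [map_sub] using this
  have h8 : T2inv (T2 (X k)) - X k ∈ J := T2inv_T2 _
  have := J.add_mem h7 h8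
  simpa using this
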